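/- Let μ > 0 and λ > −(2/3)μ, and define Q₃(F) = 2μ|sym F|² + λ(tr F)² for F ∈ ℝ^{3×3}. Then for every π ∈ ℝ and every G ∈ ℝ^{2×2}, the minimum over a ∈ ℝ³ of Q₃(ι(G) + a⊗e₃) + 2π a₃ is attained and equals 2μ|sym G|² + (2μλ/(2μ+λ))(tr G)² − π(2λ/(2μ+λ)) tr G − π²/(2μ+λ). -/
import Mathlib


noncomputable section

/-- Embedding of a `2 × 2` matrix into `3 × 3` matrices (upper-left block). -/
def iota (G : Matrix (Fin 2) (Fin 2) ℝ) : Matrix (Fin 3) (Fin 3) ℝ :=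
  Matrix.of fun i j =>
    if hi : (i : ℕ) < 2 then
      if hj : (j : ℕ) < 2 then G ⟨(i : ℕ), hi⟩ ⟨(j : ℕ), hj⟩ else 0
    else 0

/-- The matrix `a ⊗ e₃`, whose third column is `a` and whose other columns vanish. -/
def col3 (a : Fin 3 → ℝ) : Matrix (Fin 3) (Fin 3) ℝ :=
  Matrix.of fun i j => if j = 2 then a i else 0

/-- Squared Frobenius norm of a square matrix. -/
def frobSq {n : ℕ} (F : Matrix (Fin n) (Fin n) ℝ) : ℝ := ∑ i, ∑ j, (F i j) ^ 2

/-- Symmetric part of a square matrix. -/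
def symPart {n : ℕ} (F : Matrix (Fin n) (Fin n) ℝ) : Matrix (Fin n) (Fin n) ℝ :=
  (1 / 2 : ℝ) • (F + F.transpose)

lemma key (μ lam π : ℝ) (G : Matrix (Fin 2) (Fin 2) ℝ) (a : Fin 3 → ℝ) :
    (2 * μ * frobSq (symPart (iota G + col3 a))
      + lam * ((iota G + col3 a).trace) ^ 2) + 2 * π * a 2
    = 2 * μ * frobSq (symPart G) + lam * (G.trace) ^ 2
      + μ * (a 0) ^ 2 + μ * (a 1) ^ 2 + (2 * μ + lam) * (a 2) ^ 2
      + 2 * (lam * G.trace + π) * a 2 := by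
  simp [frobSq, symPart, iota, col3, Matrix.trace, Matrix.diag, Fin.sum_univ_succ,
    Matrix.add_apply, Matrix.smul_apply, Matrix.transpose_apply]
  ring

/-- Isotropic case: with `Q₃(F) = 2μ|sym F|² + λ(tr F)²`, the minimum over `a ∈ ℝ³` of
`Q₃(ι(G) + a⊗e₃) + 2π a₃` is attained and equals
`2μ|sym G|² + (2μλ/(2μ+λ))(tr G)² − π(2λ/(2μ+λ)) tr G − π²/(2μ+λ)`. -/
theorem stmt3 (μ lam : ℝ) (hμ : 0 < μ) (hlam : -(2 / 3) * μ < lam)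
    (π : ℝ) (G : Matrix (Fin 2) (Fin 2) ℝ) :
    IsLeast
      (Set.range fun a : Fin 3 → ℝ =>
        (2 * μ * frobSq (symPart (iota G + col3 a))
          + lam * ((iota G + col3 a).trace) ^ 2) + 2 * π * a 2)
      (2 * μ * frobSq (symPart G) + (2 * μ * lam / (2 * μ + lam)) * (G.trace) ^ 2
        - π * (2 * lam / (2 * μ + lam)) * G.trace - π ^ 2 / (2 * μ + lam)) := by

  have hpos : 0 < 2 * μ + lam := by linarith
  have hne : 2 * μ + lam ≠ 0 := ne_of_gt hpos
  constructor
  · refine ⟨![0, 0, -(lam * G.trace + π) / (2 * μ + lam)], ?_⟩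
    show _ = _
    simp only []
    rw [key]
    simp only [Matrix.cons_val_zero, Matrix.cons_val_one, Matrix.head_cons,
      Matrix.cons_val_two, Matrix.tail_cons]
    field_simp
    ring
  · rintro x ⟨a, rfl⟩
    beta_reduce
    rw [key]
    have h1 : 0 ≤ (2 * μ + lam) * (a 2 + (lam * G.trace + π) / (2 * μ + lam)) ^ 2 :=
      mul_nonneg hpos.le (sq_nonneg _)
    have h2 : 0 ≤ (a 0) ^ 2 := sq_nonneg _
    have h3 : 0 ≤ (a 1) ^ 2 := sq_nonneg _
    have hexp : (2 * μ + lam) * (a 2 + (lam * G.trace + π) / (2 * μ + lam)) ^ 2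
        = (2 * μ + lam) * (a 2) ^ 2 + 2 * (lam * G.trace + π) * a 2
          + (lam * G.trace + π) ^ 2 / (2 * μ + lam) := by
      field_simp
      ring
    have hmin : 2 * μ * frobSq (symPart G) + (2 * μ * lam / (2 * μ + lam)) * (G.trace) ^ 2
        - π * (2 * lam / (2 * μ + lam)) * G.trace - π ^ 2 / (2 * μ + lam)
        = 2 * μ * frobSq (symPart G) + lam * (G.trace) ^ 2
          - (lam * G.trace + π) ^ 2 / (2 * μ + lam) := by
      field_simp
      ring
    rw [hmin]
    nlinarith [mul_nonneg hμ.le h2, mul_nonneg hμ.le h3]
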